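/- Let T>0, p∈(1,∞), α∈(1/p,1), and v∈L^p(0,T;ℝ). Then for 0<t₁<t₂≤T, one has ‖(1/Γ(α))∫₀^{t₁} [(t₁−s)^{α−1} − (t₂−s)^{α−1}] v(s) ds‖ ≤ (1/Γ(α)) ((p−1)/(αp−1))^{1−1/p} (t₂−t₁)^{α−1/p} ‖v‖_{L^p(0,t₁)}. -/

import Mathlib

open MeasureTheory Set

lemma aux_rpow_sub {a b q : ℝ} (ha : 0 ≤ a) (hab : a ≤ b) (hq : 1 ≤ q) :
    (b - a) ^ q ≤ b ^ q - a ^ q := by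
  have hb : 0 ≤ b - a := sub_nonneg.2 hab
  have h := NNReal.add_rpow_le_rpow_add (b - a).toNNReal a.toNNReal hq
  have hsum : (b - a).toNNReal + a.toNNReal = b.toNNReal := by
    rw [← Real.toNNReal_add hb ha]; congr 1; ring
  rw [hsum, ← NNReal.coe_le_coe] at h
  simp only [NNReal.coe_add, NNReal.coe_rpow, Real.coe_toNNReal _ hb,
    Real.coe_toNNReal _ ha, Real.coe_toNNReal _ (ha.trans hab)] at h
  linarith

set_option maxHeartbeats 1000000 in
theorem stmt_0 (T p α : ℝ) (hT : 0 < T) (hp : 1 < p) (hαp : 1 / p < α) (hα1 : α < 1)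
    (v : ℝ → ℝ)
    (hv : MeasureTheory.MemLp v (ENNReal.ofReal p) (volume.restrict (Set.Ioc 0 T)))
    (t₁ t₂ : ℝ) (ht₁ : 0 < t₁) (h12 : t₁ < t₂) (h2T : t₂ ≤ T) :
    |(1 / Real.Gamma α) * ∫ s in (0:ℝ)..t₁, ((t₁ - s) ^ (α - 1) - (t₂ - s) ^ (α - 1)) * v s|
      ≤ (1 / Real.Gamma α) * ((p - 1) / (α * p - 1)) ^ (1 - 1 / p) *
        (t₂ - t₁) ^ (α - 1 / p) * (∫ s in (0:ℝ)..t₁, |v s| ^ p) ^ (1 / p) := by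
  have hp0 : (0:ℝ) < p := lt_trans one_pos hp
  have hps : (0:ℝ) < p - 1 := by linarith
  have hαp' : 1 < α * p := by rwa [div_lt_iff₀ hp0] at hαp
  have hα0 : 0 < α := lt_trans (by positivity) hαp
  have hΓ : 0 < Real.Gamma α := Real.Gamma_pos_of_pos hα0
  set q : ℝ := p / (p - 1) with hqdef
  have hpq : p.HolderConjugate q := Real.HolderConjugate.conjExponent hp
  have hq1 : 1 < q := hpq.symm.lt
  have hq0 : 0 < q := lt_trans one_pos hq1
  have hinvq : 1 / q = 1 - 1 / p := by
    have := hpq.inv_add_inv_eq_one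
    rw [one_div, one_div]; linarith
  set m : ℝ := (α - 1) * q with hmdef
  have hβ : m + 1 = (α * p - 1) / (p - 1) := by
    rw [hmdef, hqdef]; field_simp; ring
  have hβ0 : 0 < m + 1 := by rw [hβ]; exact div_pos (by linarith) hps
  have hm1 : -1 < m := by linarith
  have hβq : (m + 1) * (1 / q) = α - 1 / p := by
    rw [hmdef, hqdef]; field_simp; ring
  set μ : Measure ℝ := volume.restrict (Ioo 0 t₁) with hμdef
  set K : ℝ → ℝ := fun s => (t₁ - s) ^ (α - 1) - (t₂ - s) ^ (α - 1) with hKdef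
  have ht21 : (0:ℝ) ≤ t₂ - t₁ := by linarith
  have hpt : ∀ s ∈ Ioo (0:ℝ) t₁, 0 ≤ K s ∧ K s ≤ (t₁ - s) ^ (α - 1) := by
    intro s hs
    have h1 : 0 < t₁ - s := sub_pos.2 hs.2
    have h2 : t₁ - s ≤ t₂ - s := by linarith
    constructor
    · exact sub_nonneg.2 (Real.rpow_le_rpow_of_nonpos h1 h2 (by linarith))
    · have : 0 ≤ (t₂ - s) ^ (α - 1) := Real.rpow_nonneg (by linarith) _
      simp only [hKdef]; linarith
  have hKmeas : Measurable K := by fun_prop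
  have hI1 : IntegrableOn (fun s => (t₁ - s) ^ m) (Ioo 0 t₁) volume := by
    have h := (intervalIntegral.intervalIntegrable_rpow' (a := 0) (b := t₁) hm1).comp_sub_left t₁
    simp only [sub_self, sub_zero] at h
    exact ((intervalIntegrable_iff_integrableOn_Ioc_of_le ht₁.le).mp h.symm).mono_set
      Ioo_subset_Ioc_self
  have hI2 : IntegrableOn (fun s => (t₂ - s) ^ m) (Ioo 0 t₁) volume := by
    have h := (intervalIntegral.intervalIntegrable_rpow' (a := t₂ - t₁) (b := t₂) hm1).comp_sub_left t₂
    simp only [sub_self, sub_sub_cancel] at h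
    exact ((intervalIntegrable_iff_integrableOn_Ioc_of_le ht₁.le).mp h.symm).mono_set
      Ioo_subset_Ioc_self
  have haemem : ∀ᵐ s ∂μ, s ∈ Ioo (0:ℝ) t₁ := ae_restrict_mem measurableSet_Ioo
  have hIKq : Integrable (fun s => |K s| ^ q) μ := by
    have hmK : Measurable (fun s => |K s| ^ q) := by fun_prop
    refine Integrable.mono hI1 hmK.aestronglyMeasurable ?_
    filter_upwards [haemem] with s hs
    obtain ⟨h0, hle⟩ := hpt s hs
    have h1 : 0 < t₁ - s := sub_pos.2 hs.2
    have hb : |K s| ^ q ≤ (t₁ - s) ^ m := by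
      rw [abs_of_nonneg h0, hmdef, Real.rpow_mul h1.le]
      exact Real.rpow_le_rpow h0 hle hq0.le
    rw [Real.norm_eq_abs, Real.norm_eq_abs, abs_of_nonneg (Real.rpow_nonneg (abs_nonneg _) _),
      abs_of_nonneg (Real.rpow_nonneg h1.le _)]
    exact hb
  have hKmem : MemLp K (ENNReal.ofReal q) μ := by
    rw [← memLp_norm_rpow_iff (q := ENNReal.ofReal q) hKmeas.aestronglyMeasurable
      (by simp [hq0]) (by simp), ENNReal.div_self (by simp [hq0]) (by simp),
      memLp_one_iff_integrable]
    simpa [ENNReal.toReal_ofReal hq0.le, Real.norm_eq_abs] using hIKq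
  have hvmem : MemLp v (ENNReal.ofReal p) μ := by
    refine hv.mono_measure (Measure.restrict_mono ?_ le_rfl)
    exact fun x hx => ⟨hx.1, hx.2.le.trans (h12.le.trans h2T)⟩
  have holder := integral_mul_le_Lp_mul_Lq_of_nonneg (μ := μ) hpq.symm
    (f := fun s => |K s|) (g := fun s => |v s|)
    (Filter.Eventually.of_forall fun s => abs_nonneg _)
    (Filter.Eventually.of_forall fun s => abs_nonneg _)
    (by simpa [Real.norm_eq_abs] using hKmem.norm)
    (by simpa [Real.norm_eq_abs] using hvmem.norm)
  have hIh : Integrable (fun s => (t₁ - s) ^ m - (t₂ - s) ^ m) μ := hI1.sub hI2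
  have hA1 : ∫ s, |K s| ^ q ∂μ ≤ ∫ s, ((t₁ - s) ^ m - (t₂ - s) ^ m) ∂μ := by
    refine integral_mono_ae hIKq hIh ?_
    filter_upwards [haemem] with s hs
    obtain ⟨h0, _⟩ := hpt s hs
    have h1 : 0 < t₁ - s := sub_pos.2 hs.2
    have h2 : 0 < t₂ - s := by have := hs.2; linarith
    have ha : (0:ℝ) ≤ (t₂ - s) ^ (α - 1) := Real.rpow_nonneg h2.le _
    have hab : (t₂ - s) ^ (α - 1) ≤ (t₁ - s) ^ (α - 1) :=
      Real.rpow_le_rpow_of_nonpos h1 (by linarith) (by linarith)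
    have key := aux_rpow_sub ha hab hq1.le
    rw [abs_of_nonneg h0]
    calc K s ^ q ≤ ((t₁ - s) ^ (α - 1)) ^ q - ((t₂ - s) ^ (α - 1)) ^ q := key
      _ = (t₁ - s) ^ m - (t₂ - s) ^ m := by
          rw [hmdef, Real.rpow_mul h1.le, Real.rpow_mul h2.le]
  have hA2 : ∫ s, ((t₁ - s) ^ m - (t₂ - s) ^ m) ∂μ ≤ (t₂ - t₁) ^ (m + 1) / (m + 1) := by
    have hIoc : ∫ s, ((t₁ - s) ^ m - (t₂ - s) ^ m) ∂μ
        = ∫ s in (0:ℝ)..t₁, ((t₁ - s) ^ m - (t₂ - s) ^ m) := by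
      rw [intervalIntegral.integral_of_le ht₁.le, integral_Ioc_eq_integral_Ioo]
    have hcomp1 : ∫ s in (0:ℝ)..t₁, (t₁ - s) ^ m = t₁ ^ (m + 1) / (m + 1) := by
      rw [intervalIntegral.integral_comp_sub_left (fun x => x ^ m) t₁]
      simp only [sub_self, sub_zero]
      rw [integral_rpow (Or.inl hm1), Real.zero_rpow hβ0.ne']
      ring
    have hcomp2 : ∫ s in (0:ℝ)..t₁, (t₂ - s) ^ m
        = (t₂ ^ (m + 1) - (t₂ - t₁) ^ (m + 1)) / (m + 1) := by
      rw [intervalIntegral.integral_comp_sub_left (fun x => x ^ m) t₂]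
      rw [integral_rpow (Or.inl hm1)]
      simp only [sub_zero]
    rw [hIoc, intervalIntegral.integral_sub, hcomp1, hcomp2, ← sub_div]
    · have ht12 : t₁ ^ (m + 1) ≤ t₂ ^ (m + 1) :=
        Real.rpow_le_rpow ht₁.le (by linarith) hβ0.le
      gcongr (?_ : ℝ) / _
      linarith
    · have h := (intervalIntegral.intervalIntegrable_rpow' (a := 0) (b := t₁) hm1).comp_sub_left t₁
      simpa using h.symm
    · have h := (intervalIntegral.intervalIntegrable_rpow' (a := t₂ - t₁) (b := t₂) hm1).comp_sub_left t₂
      simpa using h.symm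
  have hAnn : 0 ≤ ∫ s, |K s| ^ q ∂μ :=
    integral_nonneg fun s => Real.rpow_nonneg (abs_nonneg _) _
  have hBnn : 0 ≤ ∫ s, |v s| ^ p ∂μ :=
    integral_nonneg fun s => Real.rpow_nonneg (abs_nonneg _) _
  have hq_bound : (∫ s, |K s| ^ q ∂μ) ^ (1 / q)
      ≤ ((p - 1) / (α * p - 1)) ^ (1 - 1 / p) * (t₂ - t₁) ^ (α - 1 / p) := by
    have h1 : (∫ s, |K s| ^ q ∂μ) ^ (1 / q) ≤ ((t₂ - t₁) ^ (m + 1) / (m + 1)) ^ (1 / q) :=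
      Real.rpow_le_rpow hAnn (hA1.trans hA2) (by positivity)
    refine h1.trans_eq ?_
    have hβinv : (m + 1)⁻¹ = (p - 1) / (α * p - 1) := by
      rw [hβ]; rw [inv_div]
    rw [div_eq_mul_inv, Real.mul_rpow (Real.rpow_nonneg ht21 _) (by positivity),
      ← Real.rpow_mul ht21, hβq, hβinv, hinvq, mul_comm]
  -- final assembly
  have hIint : (∫ s in (0:ℝ)..t₁, ((t₁ - s) ^ (α - 1) - (t₂ - s) ^ (α - 1)) * v s)
      = ∫ s, K s * v s ∂μ := by
    rw [intervalIntegral.integral_of_le ht₁.le, integral_Ioc_eq_integral_Ioo]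
  have hBint : (∫ s in (0:ℝ)..t₁, |v s| ^ p) = ∫ s, |v s| ^ p ∂μ := by
    rw [intervalIntegral.integral_of_le ht₁.le, integral_Ioc_eq_integral_Ioo]
  have habs : |∫ s, K s * v s ∂μ| ≤ ∫ s, |K s| * |v s| ∂μ := by
    have h := norm_integral_le_integral_norm (f := fun s => K s * v s) (μ := μ)
    simpa [Real.norm_eq_abs, abs_mul] using h
  rw [hIint, hBint, abs_mul, abs_of_nonneg (by positivity : (0:ℝ) ≤ 1 / Real.Gamma α)]
  calc (1 / Real.Gamma α) * |∫ s, K s * v s ∂μ|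
      ≤ (1 / Real.Gamma α) * ((∫ s, |K s| ^ q ∂μ) ^ (1 / q) * (∫ s, |v s| ^ p ∂μ) ^ (1 / p)) := by
        exact mul_le_mul_of_nonneg_left (habs.trans holder) (by positivity)
    _ ≤ (1 / Real.Gamma α) * ((((p - 1) / (α * p - 1)) ^ (1 - 1 / p) * (t₂ - t₁) ^ (α - 1 / p))
          * (∫ s, |v s| ^ p ∂μ) ^ (1 / p)) := by
        have hBpow : (0:ℝ) ≤ (∫ s, |v s| ^ p ∂μ) ^ (1 / p) := Real.rpow_nonneg hBnn _
        exact mul_le_mul_of_nonneg_left (mul_le_mul_of_nonneg_right hq_bound hBpow)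
          (by positivity)
    _ = (1 / Real.Gamma α) * ((p - 1) / (α * p - 1)) ^ (1 - 1 / p) * (t₂ - t₁) ^ (α - 1 / p) *
        (∫ s, |v s| ^ p ∂μ) ^ (1 / p) := by ring
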